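/- Let L be a finite-dimensional Lie algebra over ℂ with Killing radical K, and let L_s be a Lie subalgebra of L such that L = L_s ⊕ K (internal direct sum of subspaces). Let C_L(L_s) := {x ∈ L | ⁅x, w⁆ = 0 for all w ∈ L_s}, N_L(L_s) := {x ∈ L | ⁅x, L_s⁆ ⊆ L_s}, and Z(L_s) := {w ∈ L_s | ⁅w, L_s⁆ = 0}. Then: (i) C_L(L_s) = Z(L_s) ⊕ (C_L(L_s) ∩ K) (internal direct sum); (ii) N_L(L_s) = L_s ⊕ (C_L(L_s) ∩ K) (internal direct sum). -/
import Mathlib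


/-- The Killing radical of a Lie algebra over ℂ: the kernel of the Killing form,
`K = {x ∈ L | κ(x,y) = 0 for all y ∈ L}`. -/
def killingRad (L : Type*) [LieRing L] [LieAlgebra ℂ L] : Submodule ℂ L where
  carrier := {x : L | ∀ y : L, killingForm ℂ L x y = 0}
  add_mem' := by
    intro a b ha hb y
    rw [map_add, LinearMap.add_apply, ha y, hb y, add_zero]
  zero_mem' := by
    intro y
    rw [map_zero, LinearMap.zero_apply]
  smul_mem' := by
    intro c a ha y
    rw [map_smul, LinearMap.smul_apply, ha y, smul_zero]

/-- The centraliser of a subset `s` of a Lie algebra, as a subspace: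
`{x | ⁅x, a⁆ = 0 for all a ∈ s}`. -/
def centralizerSub {L : Type*} [LieRing L] [LieAlgebra ℂ L] (s : Set L) : Submodule ℂ L where
  carrier := {x : L | ∀ a ∈ s, ⁅x, a⁆ = 0}
  add_mem' := by
    intro u v hu hv a ha
    rw [add_lie, hu a ha, hv a ha, add_zero]
  zero_mem' := by
    intro a ha
    rw [zero_lie]
  smul_mem' := by
    intro c u hu a ha
    rw [smul_lie, hu a ha, smul_zero]

/-- The normaliser of a subspace `T` of a Lie algebra, as a subspace:
`{x | ⁅x, T⁆ ⊆ T}`. -/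
def normalizerSub {L : Type*} [LieRing L] [LieAlgebra ℂ L] (T : Submodule ℂ L) :
    Submodule ℂ L where
  carrier := {x : L | ∀ a ∈ T, ⁅x, a⁆ ∈ T}
  add_mem' := by
    intro u v hu hv a ha
    rw [add_lie]
    exact T.add_mem (hu a ha) (hv a ha)
  zero_mem' := by
    intro a ha
    rw [zero_lie]
    exact T.zero_mem
  smul_mem' := by
    intro c u hu a ha
    rw [smul_lie]
    exact T.smul_mem c (hu a ha)

lemma killingRad_lie_mem {L : Type*} [LieRing L] [LieAlgebra ℂ L] {x : L}
    (hx : x ∈ killingRad L) (y : L) : ⁅x, y⁆ ∈ killingRad L := by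
  intro z
  rw [LieModule.traceForm_apply_lie_apply]
  exact hx ⁅y, z⁆

/-- With `L = L_s ⊕ K`, `L_s` a Lie subalgebra and `K` the Killing radical:
(i) `C_L(L_s) = Z(L_s) ⊕ (C_L(L_s) ∩ K)`; (ii) `N_L(L_s) = L_s ⊕ (C_L(L_s) ∩ K)`
(internal direct sums). -/
theorem statement12 (L : Type*) [LieRing L] [LieAlgebra ℂ L] [FiniteDimensional ℂ L]
    (Ls : LieSubalgebra ℂ L)
    (hcompl : IsCompl Ls.toSubmodule (killingRad L)) :
    (centralizerSub (Ls : Set L)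
        = (Ls.toSubmodule ⊓ centralizerSub (Ls : Set L))
          ⊔ (centralizerSub (Ls : Set L) ⊓ killingRad L) ∧
      Disjoint (Ls.toSubmodule ⊓ centralizerSub (Ls : Set L))
        (centralizerSub (Ls : Set L) ⊓ killingRad L)) ∧
    (normalizerSub Ls.toSubmodule
        = Ls.toSubmodule ⊔ (centralizerSub (Ls : Set L) ⊓ killingRad L) ∧
      Disjoint Ls.toSubmodule (centralizerSub (Ls : Set L) ⊓ killingRad L)) := by
  have hker : ∀ z : L, z ∈ Ls.toSubmodule → z ∈ killingRad L → z = 0 := by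
    intro z h1 h2
    have hbot : Ls.toSubmodule ⊓ killingRad L = ⊥ := hcompl.inf_eq_bot
    have : z ∈ Ls.toSubmodule ⊓ killingRad L := Submodule.mem_inf.mpr ⟨h1, h2⟩
    rw [hbot] at this
    simpa using this
  have hsplit : ∀ x : L, ∃ s k : L, s ∈ Ls.toSubmodule ∧ k ∈ killingRad L ∧ x = s + k := by
    intro x
    have hx : x ∈ Ls.toSubmodule ⊔ killingRad L := by
      rw [hcompl.sup_eq_top]; trivial
    obtain ⟨s, hs, k, hk, h⟩ := Submodule.mem_sup.mp hx
    exact ⟨s, k, hs, hk, h.symm⟩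
  refine ⟨⟨le_antisymm ?_ (sup_le inf_le_right inf_le_left), hcompl.disjoint.mono inf_le_left inf_le_right⟩,
    ⟨le_antisymm ?_ (sup_le ?_ ?_), hcompl.disjoint.mono le_rfl inf_le_right⟩⟩
  · -- C ≤ (Ls ⊓ C) ⊔ (C ⊓ K)
    intro x hx
    obtain ⟨s, k, hs, hk, hxsk⟩ := hsplit x
    have hkC : ∀ a ∈ (Ls : Set L), ⁅k, a⁆ = 0 := by
      intro a ha
      refine hker _ ?_ (killingRad_lie_mem hk a)
      have h1 : ⁅x, a⁆ = 0 := hx a ha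
      have h2 : ⁅k, a⁆ = -⁅s, a⁆ := by
        rw [hxsk, add_lie] at h1
        exact eq_neg_of_add_eq_zero_right h1
      rw [h2]
      exact Ls.toSubmodule.neg_mem (Ls.lie_mem hs ha)
    have hsC : ∀ a ∈ (Ls : Set L), ⁅s, a⁆ = 0 := by
      intro a ha
      have h1 : ⁅x, a⁆ = 0 := hx a ha
      rw [hxsk, add_lie, hkC a ha, add_zero] at h1
      exact h1
    rw [hxsk]
    exact Submodule.add_mem_sup (Submodule.mem_inf.mpr ⟨hs, hsC⟩)
      (Submodule.mem_inf.mpr ⟨hkC, hk⟩)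
  · -- N ≤ Ls ⊔ (C ⊓ K)
    intro x hx
    obtain ⟨s, k, hs, hk, hxsk⟩ := hsplit x
    have hkC : ∀ a ∈ (Ls : Set L), ⁅k, a⁆ = 0 := by
      intro a ha
      refine hker _ ?_ (killingRad_lie_mem hk a)
      have h1 : ⁅x, a⁆ ∈ Ls.toSubmodule := hx a ha
      have h2 : ⁅k, a⁆ = ⁅x, a⁆ - ⁅s, a⁆ := by
        rw [hxsk, add_lie]; abel
      rw [h2]
      exact Ls.toSubmodule.sub_mem h1 (Ls.lie_mem hs ha)
    rw [hxsk]
    exact Submodule.add_mem_sup hs (Submodule.mem_inf.mpr ⟨hkC, hk⟩)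
  · -- Ls ≤ N
    intro x hx a ha
    exact Ls.lie_mem hx ha
  · -- C ⊓ K ≤ N
    intro x hx a ha
    have h1 : ⁅x, a⁆ = 0 := hx.1 a ha
    rw [h1]
    exact Ls.toSubmodule.zero_mem
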